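/- For all x, y ∈ ℝ with |x| ≤ 1, |y| ≤ 1 and all ρ ∈ ℝ with |ρ| < 1, one has ∑_{n=0}^{∞} ρ^n · U_n(x) · T_n(y) = (1 − ρ² − 2ρxy + 2ρ²y²) / w₂(x,y|ρ). -/

import Mathlib

open Polynomial

namespace ChebGenFun

open Polynomial.Chebyshev

lemma abs_T_le (y : ℝ) (hy : |y| ≤ 1) (n : ℕ) : |(T ℝ (n : ℤ)).eval y| ≤ 1 := by
  obtain ⟨h1, h2⟩ := abs_le.1 hy
  have : y = Real.cos (Real.arccos y) := (Real.cos_arccos h1 h2).symm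
  rw [this, T_real_cos]
  exact Real.abs_cos_le_one _

lemma abs_U_le (x : ℝ) (hx : |x| ≤ 1) : ∀ n : ℕ, |(U ℝ (n : ℤ)).eval x| ≤ n + 1 := by
  intro n
  induction n with
  | zero => simp [U_zero]
  | succ n ih =>
    have h : (U ℝ ((n : ℤ) + 1)) = X * U ℝ (n : ℤ) + T ℝ ((n : ℤ) + 1) :=
      U_eq_X_mul_U_add_T ℝ (n : ℤ)
    have hcast : ((n + 1 : ℕ) : ℤ) = (n : ℤ) + 1 := by push_cast; ring
    rw [hcast, h]
    simp only [eval_add, eval_mul, eval_X]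
    calc |x * (U ℝ (n : ℤ)).eval x + (T ℝ ((n : ℤ) + 1)).eval x|
        ≤ |x * (U ℝ (n : ℤ)).eval x| + |(T ℝ ((n : ℤ) + 1)).eval x| := abs_add_le _ _
      _ ≤ 1 * (n + 1) + 1 := by
          gcongr
          · rw [abs_mul]
            exact mul_le_mul hx (ih) (abs_nonneg _) zero_le_one
          · have := abs_T_le x hx (n + 1)
            rwa [hcast] at this
      _ ≤ (n + 1 : ℕ) + 1 := by push_cast; ring_nf; norm_num

lemma hasSum_U_gen (x : ℝ) (hx : |x| ≤ 1) (t : ℂ) (ht : ‖t‖ < 1) :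
    HasSum (fun n : ℕ => t ^ n * ((((U ℝ (n : ℤ)).eval x : ℝ) : ℂ)))
      (1 / (1 - 2 * x * t + t ^ 2)) := by
  set f : ℕ → ℂ := fun n => t ^ n * ((((U ℝ (n : ℤ)).eval x : ℝ) : ℂ)) with hf
  have hsummable : Summable f := by
    apply Summable.of_norm_bounded (g := fun n : ℕ => (n + 1) * ‖t‖ ^ n)
    · have h1 : Summable (fun n : ℕ => (n : ℝ) ^ 1 * ‖t‖ ^ n) :=
        summable_pow_mul_geometric_of_norm_lt_one 1 (by rwa [Real.norm_eq_abs, abs_norm])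
      have h2 : Summable (fun n : ℕ => ‖t‖ ^ n) :=
        summable_geometric_of_lt_one (norm_nonneg t) ht
      simpa [add_mul, pow_one] using h1.add h2
    · intro n
      rw [hf]
      simp only [norm_mul, norm_pow, Complex.norm_real, Real.norm_eq_abs]
      rw [mul_comm ((n : ℝ) + 1) _]
      gcongr
      exact abs_U_le x hx n
  have hS := hsummable.hasSum
  set S := ∑' n, f n with hSdef
  -- shifted sums
  have h2 : HasSum (fun n : ℕ => f (n + 2)) (S - (f 0 + f 1)) := by
    have := (hasSum_nat_add_iff' (f := f) 2).2 hS
    simpa [Finset.sum_range_succ] using this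
  have hrec : ∀ n : ℕ, f (n + 2) = 2 * x * t * f (n + 1) - t ^ 2 * f n := by
    intro n
    have hU : U ℝ ((n : ℤ) + 2) = 2 * X * U ℝ ((n : ℤ) + 1) - U ℝ (n : ℤ) :=
      U_add_two ℝ (n : ℤ)
    have hcast2 : (((n + 2 : ℕ)) : ℤ) = (n : ℤ) + 2 := by push_cast; ring
    have hcast1 : (((n + 1 : ℕ)) : ℤ) = (n : ℤ) + 1 := by push_cast; ring
    rw [hf]
    simp only [hcast2, hcast1, hU, eval_sub, eval_mul, eval_X, eval_ofNat]
    push_cast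
    ring
  have h3 : HasSum (fun n : ℕ => f (n + 2)) (2 * x * t * (S - f 0) - t ^ 2 * S) := by
    have ha : HasSum (fun n : ℕ => 2 * x * t * f (n + 1)) (2 * x * t * (S - f 0)) := by
      have := (hasSum_nat_add_iff' (f := f) 1).2 hS
      simp only [Finset.sum_range_one] at this
      exact this.mul_left _
    have hb : HasSum (fun n : ℕ => t ^ 2 * f n) (t ^ 2 * S) := hS.mul_left _
    have := ha.sub hb
    simpa [hrec] using this
  have heq : S - (f 0 + f 1) = 2 * x * t * (S - f 0) - t ^ 2 * S :=
    h2.unique h3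
  have hf0 : f 0 = 1 := by simp [hf, U_zero]
  have hf1 : f 1 = 2 * x * t := by
    rw [hf]
    norm_num [U_one]
    ring
  rw [hf0, hf1] at heq
  -- denominator nonzero
  have hD : (1 - 2 * x * t + t ^ 2 : ℂ) ≠ 0 := by
    set a : ℂ := (x : ℂ) + (Real.sqrt (1 - x ^ 2) : ℂ) * Complex.I with ha
    have hx2 : (1 : ℝ) - x ^ 2 ≥ 0 := by
      have := abs_le.1 hx
      nlinarith [this.1, this.2]
    have hna : Complex.normSq a = 1 := by
      simp [ha, Complex.normSq_apply]
      nlinarith [Real.sq_sqrt hx2, Real.sqrt_nonneg (1 - x ^ 2)]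
    have hnorm_a : ‖a‖ = 1 := by
      rw [Complex.norm_def, hna, Real.sqrt_one]
    have hfact : (1 - 2 * x * t + t ^ 2 : ℂ) = (t - a) * (t - (starRingEnd ℂ) a) := by
      have h1 : a + (starRingEnd ℂ) a = 2 * (x : ℂ) := by
        rw [Complex.add_conj, ha]
        simp
      have h2 : a * (starRingEnd ℂ) a = 1 := by
        rw [Complex.mul_conj, hna]; norm_num
      linear_combination t * h1 - h2
    rw [hfact]
    apply mul_ne_zero
    · intro h
      rw [sub_eq_zero.1 h, hnorm_a] at ht; exact lt_irrefl 1 ht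
    · intro h
      have hta : t = (starRingEnd ℂ) a := sub_eq_zero.1 h
      have hns : ‖(starRingEnd ℂ) a‖ = 1 := by
        rw [show (starRingEnd ℂ) a = star a from rfl, norm_star]; exact hnorm_a
      rw [hta, hns] at ht; exact lt_irrefl 1 ht
  have hSval : S = 1 / (1 - 2 * x * t + t ^ 2) := by
    rw [eq_div_iff hD]
    linear_combination heq
  rw [← hSval]
  exact hS

end ChebGenFun

theorem chebyshev_U_T_gen_fun (x y ρ : ℝ) (hx : |x| ≤ 1) (hy : |y| ≤ 1) (hρ : |ρ| < 1) :
    ∑' n : ℕ, ρ ^ n * (Chebyshev.U ℝ (n : ℤ)).eval x * (Chebyshev.T ℝ (n : ℤ)).eval y =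
      (1 - ρ ^ 2 - 2 * ρ * x * y + 2 * ρ ^ 2 * y ^ 2) /
        ((1 - ρ ^ 2) ^ 2 - 4 * x * y * ρ * (1 + ρ ^ 2) + 4 * ρ ^ 2 * (x ^ 2 + y ^ 2)) := by
  obtain ⟨hy1, hy2⟩ := abs_le.1 hy
  set a : ℝ := Real.arccos y with ha
  have hcos : Real.cos a = y := Real.cos_arccos hy1 hy2
  set s : ℝ := Real.sin a with hs
  have hs2 : s ^ 2 = 1 - y ^ 2 := by
    rw [hs, ha, Real.sin_arccos, Real.sq_sqrt (by nlinarith)]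
  set β : ℂ := Complex.exp (a * Complex.I) with hβ
  have hnormβ : ‖β‖ = 1 := by
    rw [hβ, Complex.norm_exp]
    simp
  have hnormt : ‖(ρ : ℂ) * β‖ < 1 := by
    rw [norm_mul, hnormβ, mul_one, Complex.norm_real, Real.norm_eq_abs]
    exact hρ
  have hsum := ChebGenFun.hasSum_U_gen x hx ((ρ : ℂ) * β) hnormt
  set D : ℂ := 1 - 2 * x * ((ρ : ℂ) * β) + ((ρ : ℂ) * β) ^ 2 with hD
  -- real parts
  have hre := ((Complex.hasSum_iff _ _).1 hsum).1
  have hterm : ∀ n : ℕ, ((((ρ : ℂ) * β) ^ n) * (((Chebyshev.U ℝ (n : ℤ)).eval x : ℝ) : ℂ)).re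
      = ρ ^ n * (Chebyshev.U ℝ (n : ℤ)).eval x * (Chebyshev.T ℝ (n : ℤ)).eval y := by
    intro n
    have hβn : β ^ n = Complex.exp (((n * a : ℝ) : ℂ) * Complex.I) := by
      rw [hβ, ← Complex.exp_nat_mul]
      push_cast
      ring_nf
    have hβnre : (β ^ n).re = Real.cos (n * a) := by
      rw [hβn, Complex.exp_ofReal_mul_I_re]
    have hT : (Chebyshev.T ℝ (n : ℤ)).eval y = Real.cos (n * a) := by
      rw [← hcos, Chebyshev.T_real_cos]
      norm_cast
    have hre2 : (((ρ : ℂ) * β) ^ n * (((Chebyshev.U ℝ (n : ℤ)).eval x : ℝ) : ℂ))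
        = ((ρ ^ n * (Chebyshev.U ℝ (n : ℤ)).eval x : ℝ) : ℂ) * β ^ n := by
      push_cast
      ring
    rw [hre2]
    simp only [Complex.mul_re, Complex.ofReal_re, Complex.ofReal_im, hβnre, zero_mul, sub_zero]
    rw [hT]
  have htsum : HasSum (fun n : ℕ =>
      ρ ^ n * (Chebyshev.U ℝ (n : ℤ)).eval x * (Chebyshev.T ℝ (n : ℤ)).eval y) ((1 / D).re) := by
    have := hre
    simp only [hterm] at this
    exact this
  rw [htsum.tsum_eq]
  have hβre : β.re = y := by rw [hβ, Complex.exp_ofReal_mul_I_re, hcos]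
  have hβim : β.im = s := by
    rw [hβ]
    simp [Complex.exp_ofReal_mul_I_im, hs]
  have hDre : D.re = 1 - 2 * x * ρ * y + ρ ^ 2 * (2 * y ^ 2 - 1) := by
    have h2 : s ^ 2 = 1 - y ^ 2 := hs2
    simp only [hD, pow_two, Complex.add_re, Complex.sub_re, Complex.one_re, Complex.mul_re,
      Complex.mul_im, Complex.ofReal_re, Complex.ofReal_im, Complex.re_ofNat, Complex.im_ofNat,
      hβre, hβim]
    linear_combination (-ρ ^ 2) * h2
  have hDim : D.im = 2 * ρ * s * (ρ * y - x) := by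
    simp only [hD, pow_two, Complex.add_im, Complex.sub_im, Complex.one_im, Complex.mul_re,
      Complex.mul_im, Complex.ofReal_re, Complex.ofReal_im, Complex.re_ofNat, Complex.im_ofNat,
      hβre, hβim]
    ring
  rw [one_div, Complex.inv_re, Complex.normSq_apply, hDre, hDim]
  have hnum : 1 - 2 * x * ρ * y + ρ ^ 2 * (2 * y ^ 2 - 1)
      = 1 - ρ ^ 2 - 2 * ρ * x * y + 2 * ρ ^ 2 * y ^ 2 := by ring
  have hden : (1 - 2 * x * ρ * y + ρ ^ 2 * (2 * y ^ 2 - 1)) * (1 - 2 * x * ρ * y + ρ ^ 2 * (2 * y ^ 2 - 1))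
      + (2 * ρ * s * (ρ * y - x)) * (2 * ρ * s * (ρ * y - x))
      = (1 - ρ ^ 2) ^ 2 - 4 * x * y * ρ * (1 + ρ ^ 2) + 4 * ρ ^ 2 * (x ^ 2 + y ^ 2) := by
    linear_combination (4 * ρ ^ 2 * (ρ * y - x) ^ 2) * hs2
  rw [hden, hnum]
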